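/- arXiv:2501.03552 — 7 statements merged into one kernel-verified Lean document; each statement's English description precedes it below -/
import Mathlib

section
/- Let m be a natural number, let b₀, b₁, …, b_m : ℝ → ℝ be differentiable, and let λ₁, …, λ_{m+1} ∈ ℝ. Suppose: (a) for each i ∈ {1,…,m} and all t ≥ 0, b_{i−1}'(t) + λ_i·b_{i−1}(t) ≥ b_i(t); (b) for all t ≥ 0, b_m'(t) + λ_{m+1}·b_m(t) ≥ 0; and (c) b_i(0) > 0 for every i ∈ {0,1,…,m}. Then b_i(t) > 0 for every i ∈ {0,1,…,m} and all t ≥ 0; in particular b₀(t) > 0 for all t ≥ 0. -/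
lemma pos_of_diffineq (f f' : ℝ → ℝ) (c : ℝ)
    (hd : ∀ t, HasDerivAt f (f' t) t)
    (h : ∀ t : ℝ, t ≥ 0 → f' t + c * f t ≥ 0)
    (h0 : f 0 > 0) : ∀ t : ℝ, t ≥ 0 → f t > 0 := by
  intro t ht
  set g : ℝ → ℝ := fun x => Real.exp (c * x) * f x with hg
  have hgd : ∀ x, HasDerivAt g (Real.exp (c * x) * (f' x + c * f x)) x := by
    intro x
    have h1 : HasDerivAt (fun x => Real.exp (c * x)) (c * Real.exp (c * x)) x := by
      have := (Real.hasDerivAt_exp (c * x)).comp x ((hasDerivAt_id x).const_mul c)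
      exact this.congr_deriv (by ring)
    have := h1.mul (hd x)
    exact this.congr_deriv (by ring)
  have hfc : Continuous f := Differentiable.continuous (fun x => (hd x).differentiableAt)
  have hgc : Continuous g := (Real.continuous_exp.comp (continuous_const.mul continuous_id)).mul hfc
  have hgdiff : Differentiable ℝ g := fun x => (hgd x).differentiableAt
  have hmono : MonotoneOn g (Set.Ici (0:ℝ)) := by
    apply monotoneOn_of_deriv_nonneg (convex_Ici 0) hgc.continuousOn
      (fun x _ => (hgdiff x).differentiableWithinAt)
    intro x hx
    rw [(hgd x).deriv]
    have hx0 : x ≥ 0 := le_of_lt (by simpa using hx)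
    have := h x hx0
    have he : (0:ℝ) < Real.exp (c * x) := Real.exp_pos _
    positivity
  have h1 := hmono (Set.self_mem_Ici) (Set.mem_Ici.2 ht) ht
  have hg0 : g 0 = f 0 := by simp [hg]
  have h2 : 0 < g t := lt_of_lt_of_le (hg0 ▸ h0) h1
  simp only [hg] at h2
  have he : (0:ℝ) < Real.exp (c * t) := Real.exp_pos _
  nlinarith

/-- Cascade of differential inequalities (core of Theorem 1):
`b : Fin (m+1) → ℝ → ℝ` are the barrier functions `b₀,…,b_m`, and
`lam : Fin (m+1) → ℝ` collects `λ₁,…,λ_{m+1}` (so `lam i = λ_{i+1}`).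
If `b_{i-1}' + λ_i b_{i-1} ≥ b_i` for `i ∈ [m]`, `b_m' + λ_{m+1} b_m ≥ 0`,
and all `b_i (0) > 0`, then all `b_i` stay positive on `[0,∞)`. -/
theorem stmt_2 (m : ℕ) (b b' : Fin (m + 1) → ℝ → ℝ) (lam : Fin (m + 1) → ℝ)
    (hderiv : ∀ i : Fin (m + 1), ∀ t : ℝ, HasDerivAt (b i) (b' i t) t)
    (ha : ∀ i : Fin m, ∀ t : ℝ, t ≥ 0 →
      b' i.castSucc t + lam i.castSucc * b i.castSucc t ≥ b i.succ t)
    (hb : ∀ t : ℝ, t ≥ 0 →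
      b' (Fin.last m) t + lam (Fin.last m) * b (Fin.last m) t ≥ 0)
    (hc : ∀ i : Fin (m + 1), b i 0 > 0) :
    (∀ i : Fin (m + 1), ∀ t : ℝ, t ≥ 0 → b i t > 0) ∧
      (∀ t : ℝ, t ≥ 0 → b 0 t > 0) := by
  have key : ∀ i : Fin (m + 1), ∀ t : ℝ, t ≥ 0 → b i t > 0 := by
    intro i
    induction i using Fin.reverseInduction with
    | last =>
      exact pos_of_diffineq _ _ _ (hderiv _) hb (hc _)
    | cast i ih =>
      refine pos_of_diffineq _ _ (lam i.castSucc) (hderiv _) ?_ (hc _)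
      intro t ht
      have := ha i t ht
      have := ih t ht
      linarith
  exact ⟨key, fun t ht => key 0 t ht⟩
end

section
/- Let E be a real normed vector space, let x : ℝ → E be differentiable, let h : E → ℝ be (Fréchet) differentiable, and let γ > 0. If h(x(0)) ≥ 0 and for all t ≥ 0 the Lie-derivative condition Dh(x(t))[x'(t)] + γ·h(x(t)) ≥ 0 holds (where Dh(x(t)) is the Fréchet derivative of h at x(t) and x'(t) is the derivative of x at t), then h(x(t)) ≥ 0 for all t ≥ 0. -/
/-- CBF safety guarantee: along a trajectory `x` of a system in a normed space `E`,
if the Lie-derivative condition `Dh(x t)[x' t] + γ h(x t) ≥ 0` holds for `t ≥ 0`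
and `h (x 0) ≥ 0`, then `h (x t) ≥ 0` for all `t ≥ 0`. -/
theorem stmt_3 {E : Type*} [NormedAddCommGroup E] [NormedSpace ℝ E]
    (x : ℝ → E) (x' : ℝ → E) (h : E → ℝ) (Dh : E → (E →L[ℝ] ℝ)) (γ : ℝ)
    (hγ : γ > 0)
    (hx : ∀ t : ℝ, HasDerivAt x (x' t) t)
    (hh : ∀ y : E, HasFDerivAt h (Dh y) y)
    (h0 : h (x 0) ≥ 0)
    (hcond : ∀ t : ℝ, t ≥ 0 → Dh (x t) (x' t) + γ * h (x t) ≥ 0) :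
    ∀ t : ℝ, t ≥ 0 → h (x t) ≥ 0 := by
  set ψ : ℝ → ℝ := fun t => h (x t) * Real.exp (γ * t) with hψ
  have hψd : ∀ t : ℝ, HasDerivAt ψ
      ((Dh (x t) (x' t) + γ * h (x t)) * Real.exp (γ * t)) t := by
    intro t
    have h1 : HasDerivAt (fun t => h (x t)) (Dh (x t) (x' t)) t :=
      (hh (x t)).comp_hasDerivAt t (hx t)
    have h2 : HasDerivAt (fun t => Real.exp (γ * t)) (γ * Real.exp (γ * t)) t := by
      have := (Real.hasDerivAt_exp (γ * t)).comp t
        ((hasDerivAt_id t).const_mul γ)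
      simpa [mul_comm, Function.comp_def] using this
    have := h1.mul h2
    exact this.congr_deriv (by ring)
  have hmono : MonotoneOn ψ (Set.Ici (0 : ℝ)) := by
    apply monotoneOn_of_deriv_nonneg (convex_Ici 0)
    · exact Continuous.continuousOn
        (continuous_iff_continuousAt.2 fun t => (hψd t).continuousAt)
    · intro t ht
      exact (hψd t).differentiableAt.differentiableWithinAt
    · intro t ht
      rw [interior_Ici] at ht
      rw [(hψd t).deriv]
      exact mul_nonneg (hcond t (le_of_lt ht)) (Real.exp_pos _).le
  intro t ht
  have := hmono (Set.self_mem_Ici) ht ht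
  have hψ0 : ψ 0 = h (x 0) := by simp [hψ]
  have hexp : (0:ℝ) < Real.exp (γ * t) := Real.exp_pos _
  have hψt : ψ t = h (x t) * Real.exp (γ * t) := rfl
  nlinarith [this, hψ0, hψt]
end

section
/- Let p ≥ 1, write ℝ^p for EuclideanSpace ℝ (Fin p), and let α > 0. Let φ, d, z, s : ℝ → ℝ^p with d, z, s differentiable, and suppose the disturbance-observer relations hold for all t: z'(t) = φ(t) + d(t) and s'(t) = −α·(φ(t) + d̂(t)), where d̂(t) := s(t) + α·z(t). Define the estimation error e_d(t) := d̂(t) − d(t). Then: (i) e_d is differentiable with e_d'(t) = −α·e_d(t) − d'(t) for all t; and (ii) if moreover ‖d'(t)‖ ≤ ω for all t ≥ 0 and 0 < ν < 2α, then with κ := α − ν/2 one has ‖e_d(t)‖² ≤ ‖e_d(0)‖²·exp(−2κ·t) + ω²/(2νκ) for all t ≥ 0. -/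
open Real Set


/-- Disturbance observer error dynamics and Lyapunov estimate.
With `d̂ = s + α z`, `z' = φ + d`, `s' = −α (φ + d̂)`, the estimation error
`e_d = d̂ − d` satisfies `e_d' = −α e_d − d'`; and if `‖d'‖ ≤ ω` on `[0,∞)` and
`0 < ν < 2α`, then with `κ = α − ν/2`,
`‖e_d t‖² ≤ ‖e_d 0‖² exp(−2κ t) + ω²/(2νκ)` for all `t ≥ 0`. -/
theorem stmt_5 (p : ℕ) (hp : 1 ≤ p) (α : ℝ) (hα : α > 0)
    (φ d z s d' z' s' : ℝ → EuclideanSpace ℝ (Fin p))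
    (hd : ∀ t : ℝ, HasDerivAt d (d' t) t)
    (hz : ∀ t : ℝ, HasDerivAt z (z' t) t)
    (hs : ∀ t : ℝ, HasDerivAt s (s' t) t)
    (hzeq : ∀ t : ℝ, z' t = φ t + d t)
    (hseq : ∀ t : ℝ, s' t = -α • (φ t + (s t + α • z t))) :
    (∀ t : ℝ, HasDerivAt (fun τ : ℝ => (s τ + α • z τ) - d τ)
      (-α • ((s t + α • z t) - d t) - d' t) t) ∧
    (∀ ω ν : ℝ, 0 < ν → ν < 2 * α → (∀ t : ℝ, t ≥ 0 → ‖d' t‖ ≤ ω) →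
      ∀ t : ℝ, t ≥ 0 →
        ‖(s t + α • z t) - d t‖ ^ 2 ≤
          ‖(s 0 + α • z 0) - d 0‖ ^ 2 * Real.exp (-2 * (α - ν / 2) * t) +
            ω ^ 2 / (2 * ν * (α - ν / 2))) := by
  set E := fun τ : ℝ => (s τ + α • z τ) - d τ with hE
  have he : ∀ t, HasDerivAt E (-α • E t - d' t) t := by
    intro t
    have h1 : HasDerivAt E (s' t + α • z' t - d' t) t :=
      ((hs t).add ((hz t).const_smul α)).sub (hd t)
    convert h1 using 1
    rw [hzeq, hseq]
    simp only [hE]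
    module
  refine ⟨he, ?_⟩
  intro ω ν hν hνα hω t ht
  set κ := α - ν / 2 with hκ
  have hκpos : 0 < κ := by rw [hκ]; linarith
  have hω0 : 0 ≤ ω := le_trans (norm_nonneg _) (hω 0 le_rfl)
  set c := ω ^ 2 / (2 * ν * κ) with hc
  have hc0 : 0 ≤ c := by positivity
  have hcc : 2 * κ * c = ω ^ 2 / ν := by
    rw [hc]; field_simp
  -- V as inner product
  have hVd : ∀ τ : ℝ, HasDerivAt (fun x : ℝ => ‖E x‖ ^ 2)
      ((inner ℝ (E τ) (-α • E τ - d' τ) : ℝ) + inner ℝ (-α • E τ - d' τ) (E τ)) τ := by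
    intro τ
    have h := HasDerivAt.inner ℝ (he τ) (he τ)
    have heq : (fun x : ℝ => ‖E x‖ ^ 2) = fun x : ℝ => (inner ℝ (E x) (E x) : ℝ) := by
      funext x; rw [real_inner_self_eq_norm_sq]
    rw [heq]
    exact h
  set g := fun τ : ℝ => (‖E τ‖ ^ 2 - c) * Real.exp (2 * κ * τ) with hg
  have hgd : ∀ τ : ℝ, HasDerivAt g
      (((inner ℝ (E τ) (-α • E τ - d' τ) : ℝ) + inner ℝ (-α • E τ - d' τ) (E τ)) * Real.exp (2 * κ * τ)
        + (‖E τ‖ ^ 2 - c) * (2 * κ * Real.exp (2 * κ * τ))) τ := by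
    intro τ
    have h1 : HasDerivAt (fun x : ℝ => Real.exp (2 * κ * x)) (2 * κ * Real.exp (2 * κ * τ)) τ := by
      have h2 := ((hasDerivAt_id τ).const_mul (2 * κ)).exp
      simpa [mul_comm] using h2
    exact ((hVd τ).sub_const c).mul h1
  have hderiv_nonpos : ∀ x : ℝ, 0 ≤ x →
      ((inner ℝ (E x) (-α • E x - d' x) : ℝ) + inner ℝ (-α • E x - d' x) (E x)) * Real.exp (2 * κ * x)
        + (‖E x‖ ^ 2 - c) * (2 * κ * Real.exp (2 * κ * x)) ≤ 0 := by
    intro x hx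
    have hip : (inner ℝ (E x) (-α • E x - d' x) : ℝ) = -α * ‖E x‖ ^ 2 - inner ℝ (E x) (d' x) := by
      rw [inner_sub_right, real_inner_smul_right, real_inner_self_eq_norm_sq]
    have hip2 : (inner ℝ (-α • E x - d' x) (E x) : ℝ) = -α * ‖E x‖ ^ 2 - inner ℝ (d' x) (E x) := by
      rw [inner_sub_left, real_inner_smul_left, real_inner_self_eq_norm_sq]
    have hcs : |(inner ℝ (E x) (d' x) : ℝ)| ≤ ‖E x‖ * ω := by
      calc |(inner ℝ (E x) (d' x) : ℝ)| ≤ ‖E x‖ * ‖d' x‖ := abs_real_inner_le_norm _ _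
        _ ≤ ‖E x‖ * ω := mul_le_mul_of_nonneg_left (hω x hx) (norm_nonneg _)
    have hcs2 : |(inner ℝ (d' x) (E x) : ℝ)| ≤ ‖E x‖ * ω := by
      rw [real_inner_comm]; exact hcs
    have hexp : 0 < Real.exp (2 * κ * x) := Real.exp_pos _
    have key : ((inner ℝ (E x) (-α • E x - d' x) : ℝ) + inner ℝ (-α • E x - d' x) (E x))
        + (‖E x‖ ^ 2 - c) * (2 * κ) ≤ 0 := by
      rw [hip, hip2]
      have h1 := abs_le.mp hcs
      have h2 := abs_le.mp hcs2
      have h3 : 2 * ‖E x‖ * ω ≤ ν * ‖E x‖ ^ 2 + ω ^ 2 / ν := by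
        rw [← sub_nonneg]
        have heq2 : ν * ‖E x‖ ^ 2 + ω ^ 2 / ν - 2 * ‖E x‖ * ω = (ν * ‖E x‖ - ω) ^ 2 / ν := by
          field_simp; ring
        rw [heq2]; positivity
      simp only [hκ] at hcc ⊢
      linarith [h1.1, h2.1, h3, hcc]
    nlinarith [key, hexp]
  have hgdiff : Differentiable ℝ g := fun τ => (hgd τ).differentiableAt
  have hanti : AntitoneOn g (Set.Ici (0:ℝ)) := by
    apply antitoneOn_of_deriv_nonpos (convex_Ici 0) hgdiff.continuous.continuousOn
      (fun x _ => (hgdiff x).differentiableWithinAt)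
    intro x hx
    rw [interior_Ici] at hx
    rw [(hgd x).deriv]
    exact hderiv_nonpos x (le_of_lt hx)
  have hgle : g t ≤ g 0 := hanti (Set.self_mem_Ici) ht ht
  simp only [hg] at hgle
  rw [mul_zero, Real.exp_zero, mul_one] at hgle
  have hA : (0:ℝ) < Real.exp (2 * κ * t) := Real.exp_pos _
  have hB : (0:ℝ) < Real.exp (-2 * κ * t) := Real.exp_pos _
  have hAB : Real.exp (2 * κ * t) * Real.exp (-2 * κ * t) = 1 := by
    rw [← Real.exp_add]; ring_nf; exact Real.exp_zero
  have hgoal : ‖E t‖ ^ 2 ≤ ‖E 0‖ ^ 2 * Real.exp (-2 * κ * t) + c := by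
    nlinarith [mul_le_mul_of_nonneg_right hgle (le_of_lt hB), hc0, hB, sq_nonneg (‖E 0‖)]
  simpa [hE, hκ, hc] using hgoal
end

section
/- Let p ≥ 1 and m ≥ 1, write ℝ^p for EuclideanSpace ℝ (Fin p), and fix α > 0, T₁, …, T_m > 0 and ω ≥ 0. Then there exists B ≥ 0 (depending only on α, the T_j, and ω) such that: for all differentiable functions d, g₀, g₁, …, g_m : ℝ → ℝ^p satisfying, for all t ≥ 0, (a) g₀'(t) = −α·(g₀(t) − d(t)) (disturbance-observer estimate dynamics), (b) g_j'(t) = −T_j·(g_j(t) − g_{j−1}(t)) for each j ∈ {1,…,m} (low-pass filter chain), and (c) ‖d'(t)‖ ≤ ω, the filtered disturbance estimation error δ(t) := g_m(t) − d(t) is bounded on [0,∞) and satisfies limsup_{t→∞} ‖δ(t)‖ ≤ B. -/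
open Filter

lemma exp_decay_small {lam C ε : ℝ} (hlam : 0 < lam) (hC : 0 ≤ C) (hε : 0 < ε) (s : ℝ) :
    ∃ s', s ≤ s' ∧ ∀ t, s' ≤ t → Real.exp (-(lam * (t - s))) * C ≤ ε := by
  refine ⟨s + (C + 1) / ε / lam, le_add_of_nonneg_right (by positivity), ?_⟩
  intro t ht
  set z := lam * (t - s) with hz_def
  have hz : (C + 1) / ε ≤ z := by
    have h1 : (C + 1) / ε / lam ≤ t - s := by linarith
    calc (C + 1) / ε = lam * ((C + 1) / ε / lam) := by field_simp
      _ ≤ lam * (t - s) := mul_le_mul_of_nonneg_left h1 hlam.le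
  -- note: field_simp goal fixed below
  have hez : (C + 1) / ε ≤ Real.exp z := le_trans hz (by linarith [Real.add_one_le_exp z])
  have h3 : Real.exp (-z) ≤ ε / (C + 1) := by
    rw [Real.exp_neg, ← inv_div]
    exact inv_anti₀ (by positivity) hez
  have := mul_le_mul_of_nonneg_right h3 hC
  have h4 : ε / (C + 1) * C ≤ ε := by
    rw [div_mul_eq_mul_div, div_le_iff₀ (by positivity)]
    nlinarith
  linarith

lemma decay_bound {E : Type*} [NormedAddCommGroup E] [NormedSpace ℝ E]
    {lam M s : ℝ} (hlam : 0 < lam)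
    {x x' u : ℝ → E} (hx : ∀ t, HasDerivAt x (x' t) t)
    (heq : ∀ t, s ≤ t → x' t = -lam • x t + u t)
    (hu : ∀ t, s ≤ t → ‖u t‖ ≤ M) :
    ∀ t, s ≤ t → ‖x t‖ ≤ Real.exp (-(lam * (t - s))) * ‖x s‖ + M / lam := by
  have hM : 0 ≤ M := le_trans (norm_nonneg _) (hu s le_rfl)
  intro t ht
  have hexp : ∀ r : ℝ, HasDerivAt (fun r : ℝ => Real.exp (lam * r)) (Real.exp (lam * r) * lam) r :=
    fun r => by simpa using ((hasDerivAt_id r).const_mul lam).exp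
  set y : ℝ → E := fun r => Real.exp (lam * r) • x r with hy_def
  have hy : ∀ r, HasDerivAt y (Real.exp (lam * r) • x' r + (Real.exp (lam * r) * lam) • x r) r :=
    fun r => (hexp r).smul (hx r)
  set Bf : ℝ → ℝ := fun r =>
    Real.exp (lam * s) * ‖x s‖ + M / lam * (Real.exp (lam * r) - Real.exp (lam * s)) with hBf_def
  have hB' : ∀ r, HasDerivAt Bf (M * Real.exp (lam * r)) r := by
    intro r
    have h2 := (((hexp r).sub_const (Real.exp (lam * s))).const_mul (M / lam)).const_add
      (Real.exp (lam * s) * ‖x s‖)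
    rw [show M / lam * (Real.exp (lam * r) * lam) = M * Real.exp (lam * r) by
      rw [div_mul_eq_mul_div, div_eq_iff hlam.ne']; ring] at h2
    exact h2
  have key : ‖y t‖ ≤ Bf t := by
    refine image_norm_le_of_norm_deriv_right_le_deriv_boundary
      (f := y) (f' := fun r => Real.exp (lam * r) • u r) (a := s) (b := t)
      (fun r _ => (hy r).continuousAt.continuousWithinAt) (fun r hr => ?_) ?_ hB'
      (fun r hr => ?_) (Set.right_mem_Icc.2 ht)
    · have h := (hy r).hasDerivWithinAt (s := Set.Ici r)
      rw [heq r hr.1] at h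
      convert h using 1
      simp only [smul_add, smul_smul]
      module
    · simp [hy_def, hBf_def, norm_smul, abs_of_pos (Real.exp_pos _)]
    · rw [norm_smul, Real.norm_eq_abs, abs_of_pos (Real.exp_pos _), mul_comm M]
      exact mul_le_mul_of_nonneg_left (hu r hr.1) (Real.exp_pos _).le
  set a := Real.exp (lam * s) with ha
  set b := Real.exp (lam * t) with hb
  have hb0 : 0 < b := Real.exp_pos _
  have ha0 : 0 < a := Real.exp_pos _
  have key2 : b * ‖x t‖ ≤ a * ‖x s‖ + M / lam * (b - a) := by
    have h := key
    rw [hy_def] at h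
    simp only [norm_smul, Real.norm_eq_abs, abs_of_pos (Real.exp_pos _)] at h
    exact h
  have hab : Real.exp (-(lam * (t - s))) = a / b := by
    rw [show -(lam * (t - s)) = lam * s - lam * t by ring, Real.exp_sub]
  rw [hab]
  have hMl : 0 ≤ M / lam := div_nonneg hM hlam.le
  rw [div_mul_eq_mul_div, ← sub_nonneg]
  have : a * ‖x s‖ / b + M / lam - ‖x t‖ = (a * ‖x s‖ + M / lam * b - b * ‖x t‖) / b := by
    field_simp
  rw [this]
  apply div_nonneg _ hb0.le
  nlinarith

set_option maxHeartbeats 1000000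

/-- Lemma 1 of the paper: the filtered disturbance estimation error
`δ = g_m − d` of the DOB (`g₀' = −α (g₀ − d)`) cascaded with low-pass filters
(`g_j' = −T_j (g_j − g_{j−1})`) is globally uniformly ultimately bounded,
with an ultimate bound `B` depending only on `α`, the `T_j` and the disturbance
derivative bound `ω`. -/
theorem stmt_8 (p m : ℕ) (hp : 1 ≤ p) (hm : 1 ≤ m)
    (α : ℝ) (hα : α > 0) (T : Fin m → ℝ) (hT : ∀ j, T j > 0)
    (ω : ℝ) (hω : ω ≥ 0) :
    ∃ B : ℝ, B ≥ 0 ∧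
      ∀ (d d' : ℝ → EuclideanSpace ℝ (Fin p))
        (g g' : Fin (m + 1) → ℝ → EuclideanSpace ℝ (Fin p)),
        (∀ t : ℝ, HasDerivAt d (d' t) t) →
        (∀ i : Fin (m + 1), ∀ t : ℝ, HasDerivAt (g i) (g' i t) t) →
        (∀ t : ℝ, t ≥ 0 → g' 0 t = -α • (g 0 t - d t)) →
        (∀ j : Fin m, ∀ t : ℝ, t ≥ 0 →
          g' j.succ t = -(T j) • (g j.succ t - g j.castSucc t)) →
        (∀ t : ℝ, t ≥ 0 → ‖d' t‖ ≤ ω) →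
        (∃ C : ℝ, ∀ t : ℝ, t ≥ 0 → ‖g (Fin.last m) t - d t‖ ≤ C) ∧
          Filter.limsup (fun t => ‖g (Fin.last m) t - d t‖) Filter.atTop ≤ B := by
  classical
  set T' : ℕ → ℝ := fun i => if h : i < m then T ⟨i, h⟩ else 1 with hT'_def
  have hT'pos : ∀ i, 0 < T' i := by
    intro i; simp only [hT'_def]; split
    · exact hT _
    · norm_num
  set f : ℕ → ℝ := fun j => ω / α + ∑ i ∈ Finset.range j, ω / T' i with hf_def
  have hfnn : ∀ j, 0 ≤ f j := fun j =>
    add_nonneg (div_nonneg hω hα.le)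
      (Finset.sum_nonneg fun i _ => div_nonneg hω (hT'pos i).le)
  refine ⟨f m, hfnn m, ?_⟩
  intro d d' g g' hd hg hg0 hgj hd'
  have main : ∀ j : ℕ, ∀ hj : j ≤ m,
      (∃ C : ℝ, 0 ≤ C ∧ ∀ t, 0 ≤ t → ‖g ⟨j, by omega⟩ t - d t‖ ≤ C) ∧
      (∀ ε : ℝ, 0 < ε → ∃ s : ℝ, 0 ≤ s ∧
        ∀ t, s ≤ t → ‖g ⟨j, by omega⟩ t - d t‖ ≤ f j + ε) := by
    intro j
    induction j with
    | zero =>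
      intro hj
      have hx : ∀ t, HasDerivAt (fun t => g ⟨0, by omega⟩ t - d t)
          (g' ⟨0, by omega⟩ t - d' t) t := fun t => (hg _ t).sub (hd t)
      have heq : ∀ t, (0:ℝ) ≤ t →
          g' ⟨0, by omega⟩ t - d' t = -α • (g ⟨0, by omega⟩ t - d t) + (-d' t) := by
        intro t ht
        have h0 : (⟨0, by omega⟩ : Fin (m+1)) = 0 := rfl
        rw [h0, hg0 t ht]
        abel
      have hu : ∀ t, (0:ℝ) ≤ t → ‖-d' t‖ ≤ ω := by
        intro t ht; rw [norm_neg]; exact hd' t ht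
      have hdec := decay_bound hα hx heq hu
      constructor
      · refine ⟨‖g ⟨0, by omega⟩ 0 - d 0‖ + ω / α,
          add_nonneg (norm_nonneg _) (div_nonneg hω hα.le), ?_⟩
        intro t ht
        have h1 := hdec t ht
        have h2 : Real.exp (-(α * (t - 0))) ≤ 1 := by
          rw [Real.exp_le_one_iff]; nlinarith
        nlinarith [norm_nonneg (g ⟨0, by omega⟩ 0 - d 0)]
      · intro ε hε
        obtain ⟨s', hs', hdecay⟩ := exp_decay_small hα
          (norm_nonneg (g ⟨0, by omega⟩ 0 - d 0)) hε (0:ℝ)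
        refine ⟨s', hs', fun t ht => ?_⟩
        have h1 := hdec t (le_trans hs' ht)
        have h2 := hdecay t ht
        have hf0 : f 0 = ω / α := by simp [hf_def]
        rw [hf0]
        linarith
    | succ k ih =>
      intro hj
      obtain ⟨⟨Ck, hCk0, hCk⟩, hevk⟩ := ih (by omega)
      have hkm : k < m := by omega
      set jj : Fin m := ⟨k, hkm⟩ with hjj
      have hTk : T' k = T jj := dif_pos hkm
      have hsucc : (jj.succ : Fin (m+1)) = ⟨k+1, by omega⟩ := rfl
      have hcast : (jj.castSucc : Fin (m+1)) = ⟨k, by omega⟩ := rfl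
      have hx : ∀ t, HasDerivAt (fun t => g ⟨k+1, by omega⟩ t - d t)
          (g' ⟨k+1, by omega⟩ t - d' t) t := fun t => (hg _ t).sub (hd t)
      set u : ℝ → EuclideanSpace ℝ (Fin p) :=
        fun t => T jj • (g ⟨k, by omega⟩ t - d t) - d' t with hu_def
      have heq : ∀ t, (0:ℝ) ≤ t →
          g' ⟨k+1, by omega⟩ t - d' t
            = -(T jj) • (g ⟨k+1, by omega⟩ t - d t) + u t := by
        intro t ht
        have h1 := hgj jj t ht
        rw [hsucc, hcast] at h1
        rw [h1, hu_def]
        module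
      have hubound : ∀ (s D : ℝ), 0 ≤ s →
          (∀ t, s ≤ t → ‖g ⟨k, by omega⟩ t - d t‖ ≤ D) →
          ∀ t, s ≤ t → ‖u t‖ ≤ T jj * D + ω := by
        intro s D hs hD t ht
        have ht0 : (0:ℝ) ≤ t := le_trans hs ht
        calc ‖u t‖ ≤ ‖T jj • (g ⟨k, by omega⟩ t - d t)‖ + ‖d' t‖ := norm_sub_le _ _
          _ ≤ T jj * D + ω := by
            rw [norm_smul, Real.norm_eq_abs, abs_of_pos (hT jj)]
            exact add_le_add (mul_le_mul_of_nonneg_left (hD t ht) (hT jj).le) (hd' t ht0)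
      -- global bound
      have hglob : ∀ t, (0:ℝ) ≤ t → ‖g ⟨k+1, by omega⟩ t - d t‖ ≤
          ‖g ⟨k+1, by omega⟩ 0 - d 0‖ + (T jj * Ck + ω) / T jj := by
        intro t ht
        have h1 := decay_bound (hT jj) hx heq (hubound 0 Ck le_rfl hCk) t ht
        have h2 : Real.exp (-(T jj * (t - 0))) ≤ 1 := by
          rw [Real.exp_le_one_iff]; nlinarith [hT jj]
        nlinarith [norm_nonneg (g ⟨k+1, by omega⟩ 0 - d 0)]
      set Ck1 : ℝ := ‖g ⟨k+1, by omega⟩ 0 - d 0‖ + (T jj * Ck + ω) / T jj with hCk1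
      have hCk10 : 0 ≤ Ck1 :=
        add_nonneg (norm_nonneg _)
          (div_nonneg (add_nonneg (mul_nonneg (hT jj).le hCk0) hω) (hT jj).le)
      constructor
      · exact ⟨Ck1, hCk10, hglob⟩
      · intro ε hε
        obtain ⟨s, hs0, hs⟩ := hevk (ε/2) (by linarith)
        have huε : ∀ t, s ≤ t → ‖u t‖ ≤ T jj * (f k + ε/2) + ω :=
          hubound s (f k + ε/2) hs0 hs
        have heq' : ∀ t, s ≤ t → g' ⟨k+1, by omega⟩ t - d' t
            = -(T jj) • (g ⟨k+1, by omega⟩ t - d t) + u t :=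
          fun t ht => heq t (le_trans hs0 ht)
        have hdec := decay_bound (hT jj) hx heq' huε
        obtain ⟨s', hss', hdecay⟩ := exp_decay_small (hT jj) hCk10 (half_pos hε) s
        refine ⟨s', le_trans hs0 hss', fun t ht => ?_⟩
        have hst : s ≤ t := le_trans hss' ht
        have h1 := hdec t hst
        have h2 : Real.exp (-(T jj * (t - s))) * ‖g ⟨k+1, by omega⟩ s - d s‖ ≤
            Real.exp (-(T jj * (t - s))) * Ck1 :=
          mul_le_mul_of_nonneg_left (hglob s hs0) (Real.exp_pos _).le
        have h3 := hdecay t ht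
        have h4 : (T jj * (f k + ε/2) + ω) / T jj = f k + ε/2 + ω / T jj := by
          rw [add_div, mul_div_cancel_left₀ _ (hT jj).ne']
        have h5 : f (k+1) = f k + ω / T jj := by
          simp only [hf_def, Finset.sum_range_succ, hTk]
          ring
        rw [h5]
        rw [h4] at h1
        linarith [le_trans h1 (add_le_add_left (le_trans h2 h3) (f k + ε/2 + ω / T jj))]
  obtain ⟨⟨C, _, hC⟩, hev⟩ := main m le_rfl
  have hlast : (Fin.last m) = ⟨m, by omega⟩ := rfl
  rw [hlast]
  refine ⟨⟨C, fun t ht => hC t ht⟩, ?_⟩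
  refine le_of_forall_pos_le_add ?_
  intro ε hε
  obtain ⟨s, hs0, hs⟩ := hev ε hε
  exact Filter.limsup_le_of_le
    (Filter.isCoboundedUnder_le_of_le Filter.atTop (x := 0) fun t => norm_nonneg _)
    (Filter.eventually_atTop.2 ⟨s, hs⟩)
end

section
/- Let p ≥ 1 and m ≥ 1, let T₁, …, T_m > 0 and α > 0, and let A be the real square matrix of size (m+1)·p defined in (m+1)×(m+1) block form with p×p blocks as follows: the diagonal blocks are −T_j·I_p for j = 1,…,m and −α·I_p in block position (m+1, m+1); the subdiagonal blocks in positions (j+1, j) are T_j·I_p for j = 1,…,m−1; the block in position (1, m+1) is α·I_p; and all other blocks are zero. Then the characteristic polynomial of A equals (X + α)^p · ∏_{j=1}^{m} (X + T_j)^p. Consequently, every complex eigenvalue of A lies in the set {−α, −T₁, …, −T_m}, and in particular every eigenvalue of A is a negative real number. -/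
open Polynomial

section Aux

lemma my_eval_charpoly_of_mem_spectrum {n K : Type*} [Fintype n] [DecidableEq n] [Field K]
    (M : Matrix n n K) (z : K) (hz : z ∈ spectrum K M) : M.charpoly.eval z = 0 := by
  rw [spectrum.mem_iff, Matrix.isUnit_iff_isUnit_det, isUnit_iff_ne_zero, not_not] at hz
  rw [Matrix.charpoly, _root_.eval_det, Matrix.matPolyEquiv_charmatrix]
  simpa [Matrix.scalar, Algebra.algebraMap_eq_smul_one] using hz

def myRev (m : ℕ) : Fin (m + 1) → Fin (m + 1) := fun i =>
  if (i : ℕ) = m then i else ⟨m - 1 - i, by omega⟩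

lemma myRev_val (m : ℕ) (i : Fin (m + 1)) :
    (myRev m i : ℕ) = if (i : ℕ) = m then m else m - 1 - i := by
  unfold myRev
  split_ifs with h <;> simp [h]

lemma myRev_involutive (m : ℕ) : Function.Involutive (myRev m) := by
  intro i
  have hi := i.isLt
  apply Fin.ext
  rw [myRev_val, myRev_val]
  split_ifs <;> omega

end Aux

/-- The block matrix `A` of the combined filter–observer error dynamics
(proof of Lemma 1): blocks are indexed by `Fin (m+1)` (0-based; block `k` for
`k < m` corresponds to filter stage `k+1`, block `m` to the observer error).
Diagonal blocks are `−T_{k+1} I_p` (`k < m`) and `−α I_p` (`k = m`);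
subdiagonal blocks `(k+1, k)` for `k + 1 < m` equal `T_{k+1} I_p`;
block `(0, m)` equals `α I_p`; all other blocks vanish.
Its characteristic polynomial is `(X+α)^p ∏_j (X+T_j)^p`, so every complex
eigenvalue lies in `{−α, −T₁,…,−T_m}` and is a negative real number. -/
theorem stmt_9 (p m : ℕ) (hp : 1 ≤ p) (hm : 1 ≤ m)
    (T : Fin m → ℝ) (hT : ∀ j, T j > 0) (α : ℝ) (hα : α > 0)
    (A : Matrix (Fin (m + 1) × Fin p) (Fin (m + 1) × Fin p) ℝ)
    (hA : A = Matrix.of fun x y =>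
      (if x.2 = y.2 then (1 : ℝ) else 0) *
        (if hxy : x.1 = y.1 then
          (if hlt : (x.1 : ℕ) < m then -T ⟨x.1, hlt⟩ else -α)
        else if hsub : (x.1 : ℕ) = (y.1 : ℕ) + 1 ∧ (y.1 : ℕ) + 1 < m then
          T ⟨(y.1 : ℕ), Nat.lt_of_succ_lt hsub.2⟩
        else if (x.1 : ℕ) = 0 ∧ (y.1 : ℕ) = m then α
        else 0)) :
    A.charpoly = (X + C α) ^ p * ∏ j : Fin m, (X + C (T j)) ^ p ∧
    ∀ z ∈ spectrum ℂ (A.map (Complex.ofReal · )),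
      (z = -(α : ℂ) ∨ ∃ j : Fin m, z = -((T j : ℝ) : ℂ)) ∧ z.im = 0 ∧ z.re < 0 := by
  set d : Fin (m + 1) → ℝ := fun i => if h : (i : ℕ) < m then -T ⟨i, h⟩ else -α with hd
  set e : (Fin (m + 1) × Fin p) ≃ Fin ((m + 1) * p) :=
    (Equiv.prodCongr (myRev_involutive m).toPerm (Equiv.refl (Fin p))).trans finProdFinEquiv
    with he
  -- zero below "diagonal"
  have hzero : ∀ x y : Fin (m + 1) × Fin p, e y < e x → A x y = 0 := by
    rintro ⟨i, s⟩ ⟨j, t⟩ hlt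
    have hlt' : (t : ℕ) + p * (myRev m j : ℕ) < (s : ℕ) + p * (myRev m i : ℕ) := hlt
    simp only [hA, Matrix.of_apply]
    rcases eq_or_ne s t with rfl | hst
    · have hpl : (myRev m j : ℕ) < (myRev m i : ℕ) :=
        Nat.lt_of_mul_lt_mul_left (by omega : p * (myRev m j : ℕ) < p * (myRev m i : ℕ))
      rw [myRev_val, myRev_val] at hpl
      have hi := i.isLt
      have hj := j.isLt
      rcases eq_or_ne i j with rfl | hij
      · exfalso; split_ifs at hpl <;> omega
      · have hij' : (i : ℕ) ≠ (j : ℕ) := fun h => hij (Fin.ext h)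
        split_ifs at hpl with h1 h2 <;>
        · rw [dif_neg hij,
            dif_neg (by omega : ¬((i : ℕ) = (j : ℕ) + 1 ∧ (j : ℕ) + 1 < m)),
            if_neg (by omega : ¬((i : ℕ) = 0 ∧ (j : ℕ) = m))]
          simp
    · simp [hst]
  have htri : ((Matrix.reindex e e) A).BlockTriangular id := by
    intro a b hab
    rw [Matrix.reindex_apply, Matrix.submatrix_apply]
    exact hzero _ _ (by simpa using hab)
  have hdiag : ∀ x : Fin (m + 1) × Fin p, A x x = d x.1 := by
    intro x; simp [hA, hd]
  have hcp : A.charpoly = (X + C α) ^ p * ∏ j : Fin m, (X + C (T j)) ^ p := by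
    have h1 : A.charpoly = ((Matrix.reindex e e) A).charpoly :=
      (Matrix.charpoly_reindex e A).symm
    rw [h1, Matrix.charpoly_of_upperTriangular _ htri,
      ← Equiv.prod_comp e (fun a => X - C (((Matrix.reindex e e) A) a a))]
    have h2 : ∀ x : Fin (m + 1) × Fin p,
        ((Matrix.reindex e e) A) (e x) (e x) = A x x := by
      intro x; simp [Matrix.reindex_apply]
    simp only [h2, hdiag]
    rw [Fintype.prod_prod_type]
    simp only [Finset.prod_const, Finset.card_univ, Fintype.card_fin]
    rw [Fin.prod_univ_castSucc]
    have h4 : d (Fin.last m) = -α := by simp [hd]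
    have h5 : ∀ i : Fin m, d i.castSucc = -T i := by
      intro i
      simp only [hd, Fin.coe_castSucc, dif_pos i.isLt]
    rw [h4]
    rw [Finset.prod_congr rfl (fun i _ => by rw [h5 i]), mul_comm]
    congr 1
    · rw [map_neg, sub_neg_eq_add]
    · exact Finset.prod_congr rfl fun i _ => by rw [map_neg, sub_neg_eq_add]
  refine ⟨hcp, ?_⟩
  intro z hz
  have h0 := my_eval_charpoly_of_mem_spectrum _ z hz
  have hmap : (A.map (Complex.ofReal ·)).charpoly = A.charpoly.map Complex.ofRealHom :=
    Matrix.charpoly_map A Complex.ofRealHom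
  rw [hmap, hcp] at h0
  simp only [Polynomial.map_mul, Polynomial.map_pow, Polynomial.map_prod, Polynomial.map_add,
    Polynomial.map_X, Polynomial.map_C, eval_mul, eval_pow, eval_prod, eval_add, eval_X,
    eval_C, Complex.ofRealHom_eq_coe] at h0
  have hp0 : p ≠ 0 := by omega
  rcases mul_eq_zero.mp h0 with h | h
  · have : z + (α : ℂ) = 0 := pow_eq_zero_iff hp0 |>.mp h
    have hz' : z = -(α : ℂ) := by linear_combination this
    refine ⟨Or.inl hz', ?_, ?_⟩ <;> simp [hz', hα, hα.le]
  · obtain ⟨j, -, hj⟩ := Finset.prod_eq_zero_iff.mp h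
    have : z + ((T j : ℝ) : ℂ) = 0 := pow_eq_zero_iff hp0 |>.mp hj
    have hz' : z = -((T j : ℝ) : ℂ) := by linear_combination this
    exact ⟨Or.inr ⟨j, hz'⟩, by simp [hz'], by simp [hz', hT j, (hT j).le]⟩
end

section
/- Let N ≥ 1, let A be a real N×N matrix, let γ > 0, and let P be a real symmetric positive definite N×N matrix satisfying the Lyapunov equation Aᵀ·P + P·A = −γ·I_N. Let U ≥ 0, let u : ℝ → ℝ^N satisfy ‖u(t)‖ ≤ U for all t ≥ 0, and let E : ℝ → ℝ^N be differentiable with E'(t) = A·E(t) + u(t) for all t ≥ 0. Define V(t) := ⟨E(t), P·E(t)⟩. Then: (i) V is differentiable with V'(t) = −γ·‖E(t)‖² + 2·⟨E(t), P·u(t)⟩ ≤ −γ·‖E(t)‖² + 2·‖P‖·U·‖E(t)‖ for all t ≥ 0, where ‖P‖ is the operator norm of P; and (ii) for any 0 < θ < γ, V'(t) ≤ −(γ−θ)·‖E(t)‖² + ‖P‖²·U²/θ for all t ≥ 0, and consequently E is bounded on [0,∞) with limsup_{t→∞} ‖E(t)‖² ≤ (λ_max(P)/λ_min(P))·‖P‖²·U²/(θ·(γ−θ)),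 where λ_max(P) and λ_min(P) denote the largest and smallest eigenvalues of P. -/
open Filter Matrix RealInnerProductSpace

set_option maxHeartbeats 1000000

lemma adjoint_toEuclideanCLM_aux {N : ℕ} (M : Matrix (Fin N) (Fin N) ℝ) :
    ContinuousLinearMap.adjoint (Matrix.toEuclideanCLM (𝕜 := ℝ) M)
      = Matrix.toEuclideanCLM (𝕜 := ℝ) Mᵀ := by
  rw [← ContinuousLinearMap.star_eq_adjoint, ← map_star]
  congr 1

lemma rayleigh_aux {N : ℕ} (hN : 1 ≤ N) (P : Matrix (Fin N) (Fin N) ℝ) (hP : P.PosDef)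
    (x : EuclideanSpace ℝ (Fin N)) :
    (⨅ i, hP.1.eigenvalues i) * ‖x‖ ^ 2 ≤ ⟪x, (Matrix.toEuclideanCLM (𝕜 := ℝ) P) x⟫ ∧
      ⟪x, (Matrix.toEuclideanCLM (𝕜 := ℝ) P) x⟫ ≤ (⨆ i, hP.1.eigenvalues i) * ‖x‖ ^ 2 := by
  haveI : Nonempty (Fin N) := ⟨⟨0, hN⟩⟩
  set T := Matrix.toEuclideanCLM (𝕜 := ℝ) P with hTdef
  set b := hP.1.eigenvectorBasis with hbdef
  set lam := hP.1.eigenvalues with hlamdef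
  have hadj : ContinuousLinearMap.adjoint T = T := by
    rw [hTdef, adjoint_toEuclideanCLM_aux]
    congr 1
    exact hP.1
  have hTb : ∀ j, T (b j) = lam j • b j := by
    intro j
    have h := hP.1.mulVec_eigenvectorBasis j
    ext i
    have := congrFun h i
    simpa [hTdef, ofLp_toEuclideanCLM, Matrix.toLin'_apply] using this
  have hterm : ∀ i, ⟪b i, T x⟫ = lam i * ⟪x, b i⟫ := by
    intro i
    calc ⟪b i, T x⟫ = ⟪ContinuousLinearMap.adjoint T (b i), x⟫ :=
          (ContinuousLinearMap.adjoint_inner_left T x (b i)).symm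
      _ = ⟪T (b i), x⟫ := by rw [hadj]
      _ = lam i * ⟪x, b i⟫ := by rw [hTb i, real_inner_smul_left, real_inner_comm]
  have hnorm : ‖x‖ ^ 2 = ∑ i, ⟪x, b i⟫ ^ 2 := by
    rw [← real_inner_self_eq_norm_sq, ← b.sum_inner_mul_inner x x]
    refine Finset.sum_congr rfl fun i _ => ?_
    rw [real_inner_comm x (b i), sq]
  have hinner : ⟪x, T x⟫ = ∑ i, lam i * ⟪x, b i⟫ ^ 2 := by
    rw [← b.sum_inner_mul_inner x (T x)]
    refine Finset.sum_congr rfl fun i _ => ?_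
    rw [hterm i]
    ring
  constructor
  · rw [hinner, hnorm, Finset.mul_sum]
    refine Finset.sum_le_sum fun i _ => ?_
    have h1 : (⨅ i, lam i) ≤ lam i := ciInf_le (Set.Finite.bddBelow (Set.finite_range _)) i
    exact mul_le_mul_of_nonneg_right h1 (sq_nonneg _)
  · rw [hinner, hnorm, Finset.mul_sum]
    refine Finset.sum_le_sum fun i _ => ?_
    have h1 : lam i ≤ ⨆ i, lam i := le_ciSup (Set.Finite.bddAbove (Set.finite_range _)) i
    exact mul_le_mul_of_nonneg_right h1 (sq_nonneg _)

/-- Quadratic-Lyapunov estimate (inequality (22) in the proof of Lemma 1):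
for `E' = A E + u` with `‖u‖ ≤ U` and a symmetric positive definite `P`
solving `Aᵀ P + P A = −γ I`, the function `V = ⟨E, P E⟩` satisfies
`V' = −γ‖E‖² + 2⟨E, P u⟩ ≤ −γ‖E‖² + 2‖P‖U‖E‖`, and for any `0 < θ < γ`,
`V' ≤ −(γ−θ)‖E‖² + ‖P‖²U²/θ`, whence `E` is bounded with
`limsup ‖E‖² ≤ (λ_max(P)/λ_min(P))·‖P‖²U²/(θ(γ−θ))`. -/
theorem stmt_10 (N : ℕ) (hN : 1 ≤ N) (A P : Matrix (Fin N) (Fin N) ℝ)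
    (γ : ℝ) (hγ : γ > 0) (hP : P.PosDef)
    (hLyap : Aᵀ * P + P * A = -(γ • (1 : Matrix (Fin N) (Fin N) ℝ)))
    (U : ℝ) (hU : U ≥ 0)
    (u E E' : ℝ → EuclideanSpace ℝ (Fin N))
    (hu : ∀ t : ℝ, t ≥ 0 → ‖u t‖ ≤ U)
    (hE : ∀ t : ℝ, HasDerivAt E (E' t) t)
    (hdyn : ∀ t : ℝ, t ≥ 0 → E' t = (Matrix.toEuclideanCLM (𝕜 := ℝ) A) (E t) + u t) :
    (∀ t : ℝ, t ≥ 0 →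
      HasDerivAt (fun τ : ℝ => ⟪E τ, (Matrix.toEuclideanCLM (𝕜 := ℝ) P) (E τ)⟫)
        (-γ * ‖E t‖ ^ 2 + 2 * ⟪E t, (Matrix.toEuclideanCLM (𝕜 := ℝ) P) (u t)⟫) t ∧
      -γ * ‖E t‖ ^ 2 + 2 * ⟪E t, (Matrix.toEuclideanCLM (𝕜 := ℝ) P) (u t)⟫ ≤
        -γ * ‖E t‖ ^ 2 + 2 * ‖Matrix.toEuclideanCLM (𝕜 := ℝ) P‖ * U * ‖E t‖) ∧
    (∀ θ : ℝ, 0 < θ → θ < γ →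
      (∀ t : ℝ, t ≥ 0 →
        -γ * ‖E t‖ ^ 2 + 2 * ⟪E t, (Matrix.toEuclideanCLM (𝕜 := ℝ) P) (u t)⟫ ≤
          -(γ - θ) * ‖E t‖ ^ 2 + ‖Matrix.toEuclideanCLM (𝕜 := ℝ) P‖ ^ 2 * U ^ 2 / θ) ∧
      (∃ C : ℝ, ∀ t : ℝ, t ≥ 0 → ‖E t‖ ≤ C) ∧
      Filter.limsup (fun t => ‖E t‖ ^ 2) Filter.atTop ≤
        ((⨆ i, hP.1.eigenvalues i) / (⨅ i, hP.1.eigenvalues i)) *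
          ‖Matrix.toEuclideanCLM (𝕜 := ℝ) P‖ ^ 2 * U ^ 2 / (θ * (γ - θ))) := by
  haveI : Nonempty (Fin N) := ⟨⟨0, hN⟩⟩
  set T := Matrix.toEuclideanCLM (𝕜 := ℝ) P with hTdef
  set TA := Matrix.toEuclideanCLM (𝕜 := ℝ) A with hTAdef
  have hadj : ContinuousLinearMap.adjoint T = T := by
    rw [hTdef, adjoint_toEuclideanCLM_aux]
    congr 1
    exact hP.1
  -- derivative of V everywhere
  have hD0 : ∀ t : ℝ, HasDerivAt (fun τ : ℝ => ⟪E τ, T (E τ)⟫)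
      (⟪E' t, T (E t)⟫ + ⟪E t, T (E' t)⟫) t := by
    intro t
    have := (hE t).inner ℝ ((T.hasFDerivAt (x := E t)).comp_hasDerivAt t (hE t))
    simpa [Function.comp, add_comm] using this
  -- formula for the derivative on t ≥ 0
  have hform : ∀ t : ℝ, t ≥ 0 →
      ⟪E' t, T (E t)⟫ + ⟪E t, T (E' t)⟫ = -γ * ‖E t‖ ^ 2 + 2 * ⟪E t, T (u t)⟫ := by
    intro t ht
    rw [hdyn t ht]
    set v := E t
    set w := u t
    have h1 : ⟪TA v, T v⟫ = ⟪v, (Matrix.toEuclideanCLM (𝕜 := ℝ) (Aᵀ * P)) v⟫ := by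
      calc ⟪TA v, T v⟫ = ⟪v, ContinuousLinearMap.adjoint TA (T v)⟫ :=
            (ContinuousLinearMap.adjoint_inner_right TA v (T v)).symm
        _ = ⟪v, (Matrix.toEuclideanCLM (𝕜 := ℝ) (Aᵀ * P)) v⟫ := by
            rw [hTAdef, adjoint_toEuclideanCLM_aux, _root_.map_mul]; rfl
    have h2 : ⟪v, T (TA v)⟫ = ⟪v, (Matrix.toEuclideanCLM (𝕜 := ℝ) (P * A)) v⟫ := by
      rw [_root_.map_mul]; rfl
    have h3 : ⟪v, (Matrix.toEuclideanCLM (𝕜 := ℝ) (Aᵀ * P)) v⟫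
        + ⟪v, (Matrix.toEuclideanCLM (𝕜 := ℝ) (P * A)) v⟫ = -γ * ‖v‖ ^ 2 := by
      rw [← inner_add_right]
      have hsum : (Matrix.toEuclideanCLM (𝕜 := ℝ) (Aᵀ * P)) v
          + (Matrix.toEuclideanCLM (𝕜 := ℝ) (P * A)) v = -(γ • v) := by
        rw [← ContinuousLinearMap.add_apply, ← _root_.map_add, hLyap, map_neg, _root_.map_smul, _root_.map_one]
        simp
      rw [hsum, inner_neg_right, real_inner_smul_right, real_inner_self_eq_norm_sq]
      ring
    have h4 : ⟪w, T v⟫ = ⟪v, T w⟫ := by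
      calc ⟪w, T v⟫ = ⟪ContinuousLinearMap.adjoint T w, v⟫ :=
            (ContinuousLinearMap.adjoint_inner_left T v w).symm
        _ = ⟪v, T w⟫ := by rw [hadj, real_inner_comm]
    rw [inner_add_left, map_add, inner_add_right]
    linarith [h1, h2, h3, h4]
  -- basic inner product bound
  have hinner_le : ∀ t : ℝ, t ≥ 0 → ⟪E t, T (u t)⟫ ≤ ‖T‖ * U * ‖E t‖ := by
    intro t ht
    have a1 : ‖T (u t)‖ ≤ ‖T‖ * U :=
      le_trans (T.le_opNorm _) (mul_le_mul_of_nonneg_left (hu t ht) (norm_nonneg T))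
    have a2 : ⟪E t, T (u t)⟫ ≤ ‖E t‖ * (‖T‖ * U) :=
      le_trans (real_inner_le_norm _ _) (mul_le_mul_of_nonneg_left a1 (norm_nonneg _))
    nlinarith [a2]
  refine ⟨fun t ht => ⟨hform t ht ▸ hD0 t, by nlinarith [hinner_le t ht]⟩, ?_⟩
  intro θ hθ1 hθ2
  -- eigenvalue extremes
  set lam := hP.1.eigenvalues with hlamdef
  set lmin := ⨅ i, lam i with hlmindef
  set lmax := ⨆ i, lam i with hlmaxdef
  have hlminpos : 0 < lmin := by
    obtain ⟨j, hj⟩ := exists_eq_ciInf_of_finite (f := lam)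
    rw [hlmindef, ← hj]
    exact hP.eigenvalues_pos j
  have hlmaxpos : 0 < lmax := by
    obtain ⟨j⟩ := (inferInstance : Nonempty (Fin N))
    exact lt_of_lt_of_le (hP.eigenvalues_pos j)
      (le_ciSup (Set.Finite.bddAbove (Set.finite_range _)) j)
  have hbounds := fun x => rayleigh_aux hN P hP x
  -- the amgm-type bound
  have hamgm : ∀ t : ℝ, 2 * (‖T‖ * U * ‖E t‖) - θ * ‖E t‖ ^ 2 ≤ ‖T‖ ^ 2 * U ^ 2 / θ := by
    intro t
    rw [le_div_iff₀ hθ1]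
    nlinarith [sq_nonneg (θ * ‖E t‖ - ‖T‖ * U)]
  have hineq2 : ∀ t : ℝ, t ≥ 0 →
      -γ * ‖E t‖ ^ 2 + 2 * ⟪E t, T (u t)⟫ ≤
        -(γ - θ) * ‖E t‖ ^ 2 + ‖T‖ ^ 2 * U ^ 2 / θ := by
    intro t ht
    linarith [hinner_le t ht, hamgm t]
  refine ⟨hineq2, ?_⟩
  set c := (γ - θ) / lmax with hc
  have hcpos : 0 < c := div_pos (by linarith) hlmaxpos
  set K := ‖T‖ ^ 2 * U ^ 2 / θ with hK
  have hK0 : 0 ≤ K := by positivity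
  set V := fun τ : ℝ => ⟪E τ, T (E τ)⟫ with hV
  have hVub : ∀ t, V t ≤ lmax * ‖E t‖ ^ 2 := fun t => (hbounds (E t)).2
  have hVlb : ∀ t, lmin * ‖E t‖ ^ 2 ≤ V t := fun t => (hbounds (E t)).1
  set G := fun τ : ℝ => (V τ - K / c) * Real.exp (c * τ) with hG
  have hGd : ∀ t : ℝ, HasDerivAt G
      ((⟪E' t, T (E t)⟫ + ⟪E t, T (E' t)⟫) * Real.exp (c * t)
        + (V t - K / c) * (c * Real.exp (c * t))) t := by
    intro t
    have h2 : HasDerivAt (fun τ : ℝ => Real.exp (c * τ)) (c * Real.exp (c * t)) t := by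
      convert ((hasDerivAt_id t).const_mul c).exp using 1
      simp [mul_comm]
      simp only [id, mul_one]; ring
    exact ((hD0 t).sub_const (K / c)).mul h2
  have hGderiv : ∀ t ∈ interior (Set.Ici (0 : ℝ)), deriv G t ≤ 0 := by
    intro t ht'
    rw [interior_Ici] at ht'
    have ht : (0 : ℝ) ≤ t := le_of_lt ht'
    rw [(hGd t).deriv]
    have hcv : c * V t ≤ (γ - θ) * ‖E t‖ ^ 2 := by
      calc c * V t ≤ c * (lmax * ‖E t‖ ^ 2) := mul_le_mul_of_nonneg_left (hVub t) hcpos.le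
        _ = (γ - θ) * ‖E t‖ ^ 2 := by rw [hc]; field_simp
    have hD : ⟪E' t, T (E t)⟫ + ⟪E t, T (E' t)⟫ + c * V t - K ≤ 0 := by
      rw [hform t ht]
      have h5 := hinner_le t ht
      have h6 := hamgm t
      linarith
    have he : (V t - K / c) * (c * Real.exp (c * t)) = (c * V t - K) * Real.exp (c * t) := by
      field_simp
    rw [he]
    nlinarith [Real.exp_pos (c * t), hD]
  have hGanti : AntitoneOn G (Set.Ici 0) := by
    apply antitoneOn_of_deriv_nonpos (convex_Ici 0)
    · have hdiff : Differentiable ℝ G := fun s => (hGd s).differentiableAt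
      exact hdiff.continuous.continuousOn
    · exact fun x _ => (hGd x).differentiableAt.differentiableWithinAt
    · exact hGderiv
  have hVle : ∀ t : ℝ, 0 ≤ t → V t ≤ (V 0 - K / c) * Real.exp (-(c * t)) + K / c := by
    intro t ht
    have hmono := hGanti Set.self_mem_Ici (Set.mem_Ici.2 ht) ht
    have hG0 : G 0 = V 0 - K / c := by simp [hG]
    rw [hG0] at hmono
    have he : (0 : ℝ) < Real.exp (c * t) := Real.exp_pos _
    have h7 : V t - K / c ≤ (V 0 - K / c) * Real.exp (-(c * t)) := by
      rw [Real.exp_neg]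
      calc V t - K / c = (V t - K / c) * Real.exp (c * t) * (Real.exp (c * t))⁻¹ := by
            field_simp
        _ ≤ (V 0 - K / c) * (Real.exp (c * t))⁻¹ :=
            mul_le_mul_of_nonneg_right hmono (inv_nonneg.2 he.le)
    linarith
  have hM : ∀ t : ℝ, 0 ≤ t → V t ≤ |V 0 - K / c| + K / c := by
    intro t ht
    have h8 := hVle t ht
    have e1 : Real.exp (-(c * t)) ≤ 1 := by
      rw [Real.exp_le_one_iff]
      nlinarith [hcpos]
    have e0 : (0 : ℝ) ≤ Real.exp (-(c * t)) := (Real.exp_pos _).le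
    have h9 : (V 0 - K / c) * Real.exp (-(c * t)) ≤ |V 0 - K / c| := by
      calc (V 0 - K / c) * Real.exp (-(c * t)) ≤ |V 0 - K / c| * Real.exp (-(c * t)) :=
            mul_le_mul_of_nonneg_right (le_abs_self _) e0
        _ ≤ |V 0 - K / c| * 1 := mul_le_mul_of_nonneg_left e1 (abs_nonneg _)
        _ = |V 0 - K / c| := mul_one _
    linarith
  constructor
  · refine ⟨Real.sqrt ((|V 0 - K / c| + K / c) / lmin), fun t ht => ?_⟩
    apply Real.le_sqrt_of_sq_le
    rw [le_div_iff₀ hlminpos]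
    nlinarith [hVlb t, hM t ht]
  · -- limsup bound
    have hg : Tendsto (fun t : ℝ => ((V 0 - K / c) * Real.exp (-(c * t)) + K / c) / lmin)
        atTop (nhds (K / c / lmin)) := by
      have h1 : Tendsto (fun t : ℝ => -(c * t)) atTop atBot :=
        tendsto_neg_atTop_atBot.comp (Tendsto.const_mul_atTop hcpos tendsto_id)
      have h2 : Tendsto (fun t : ℝ => Real.exp (-(c * t))) atTop (nhds 0) :=
        Real.tendsto_exp_atBot.comp h1
      have h3 := ((h2.const_mul (V 0 - K / c)).add_const (K / c)).div_const lmin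
      simpa using h3
    have hev : ∀ᶠ t in atTop,
        ‖E t‖ ^ 2 ≤ ((V 0 - K / c) * Real.exp (-(c * t)) + K / c) / lmin := by
      filter_upwards [eventually_ge_atTop (0 : ℝ)] with t ht
      rw [le_div_iff₀ hlminpos]
      nlinarith [hVlb t, hVle t ht]
    have hcb : Filter.IsCoboundedUnder (· ≤ ·) atTop (fun t : ℝ => ‖E t‖ ^ 2) := by
      apply Filter.IsBoundedUnder.isCoboundedUnder_le
      exact Filter.isBoundedUnder_of ⟨0, fun t => sq_nonneg _⟩
    have hRK : K / c / lmin = lmax / lmin * ‖T‖ ^ 2 * U ^ 2 / (θ * (γ - θ)) := by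
      rw [hK, hc]
      field_simp
    calc Filter.limsup (fun t => ‖E t‖ ^ 2) atTop
        ≤ Filter.limsup (fun t : ℝ => ((V 0 - K / c) * Real.exp (-(c * t)) + K / c) / lmin)
            atTop := Filter.limsup_le_limsup hev hcb hg.isBoundedUnder_le
      _ = K / c / lmin := hg.limsup_eq
      _ = lmax / lmin * ‖T‖ ^ 2 * U ^ 2 / (θ * (γ - θ)) := hRK
end

section
/- Let p ≥ 1, write ℝ^p for EuclideanSpace ℝ (Fin p). Let e : ℝ → ℝ^p and ρ : ℝ → ℝ be continuous with ρ(t) > 0 for all t ≥ 0, suppose ‖e(0)‖ < ρ(0), and let M ≥ 0. Assume that for every t ≥ 0 the following implication holds: if ‖e(s)‖ < ρ(s) for all s ∈ [0, t], then log(ρ(t)²/(ρ(t)² − ‖e(t)‖²)) ≤ M. Then for all t ≥ 0 one has ‖e(t)‖² ≤ ρ(t)²·(1 − exp(−M)); in particular ‖e(t)‖ < ρ(t) for all t ≥ 0. -/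
/-- Barrier-Lyapunov-function invariance principle (Tee–Ge–Tay): if along the
trajectory the barrier term `log(ρ²/(ρ² − ‖e‖²))` is bounded by `M` as long as
the funnel constraint `‖e‖ < ρ` has held so far, and it holds initially, then
`‖e(t)‖² ≤ ρ(t)²(1 − exp(−M))` and in particular `‖e(t)‖ < ρ(t)` for all `t ≥ 0`. -/
theorem stmt_13 (p : ℕ) (hp : 1 ≤ p)
    (e : ℝ → EuclideanSpace ℝ (Fin p)) (ρ : ℝ → ℝ)
    (he : Continuous e) (hρ : Continuous ρ)
    (hρpos : ∀ t : ℝ, t ≥ 0 → ρ t > 0)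
    (h0 : ‖e 0‖ < ρ 0) (M : ℝ) (hM : M ≥ 0)
    (himp : ∀ t : ℝ, t ≥ 0 → (∀ s ∈ Set.Icc (0 : ℝ) t, ‖e s‖ < ρ s) →
      Real.log ((ρ t) ^ 2 / ((ρ t) ^ 2 - ‖e t‖ ^ 2)) ≤ M) :
    ∀ t : ℝ, t ≥ 0 →
      ‖e t‖ ^ 2 ≤ (ρ t) ^ 2 * (1 - Real.exp (-M)) ∧ ‖e t‖ < ρ t := by
  set c := 1 - Real.exp (-M) with hcdef
  have hc1 : c < 1 := by
    have := Real.exp_pos (-M); simp only [hcdef]; linarith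
  have key : ∀ t, 0 ≤ t → ‖e t‖ < ρ t →
      Real.log ((ρ t) ^ 2 / ((ρ t) ^ 2 - ‖e t‖ ^ 2)) ≤ M →
      ‖e t‖ ^ 2 ≤ (ρ t) ^ 2 * c := by
    intro t ht hlt hlog
    have hρt := hρpos t ht
    have hden : 0 < (ρ t) ^ 2 - ‖e t‖ ^ 2 := by nlinarith [norm_nonneg (e t)]
    have hrpos : 0 < (ρ t) ^ 2 / ((ρ t) ^ 2 - ‖e t‖ ^ 2) := div_pos (by positivity) hden
    have hr : (ρ t) ^ 2 / ((ρ t) ^ 2 - ‖e t‖ ^ 2) ≤ Real.exp M := by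
      calc (ρ t) ^ 2 / ((ρ t) ^ 2 - ‖e t‖ ^ 2)
          = Real.exp (Real.log ((ρ t) ^ 2 / ((ρ t) ^ 2 - ‖e t‖ ^ 2))) :=
            (Real.exp_log hrpos).symm
        _ ≤ Real.exp M := Real.exp_le_exp.2 hlog
    have h2 : (ρ t) ^ 2 ≤ Real.exp M * ((ρ t) ^ 2 - ‖e t‖ ^ 2) := (div_le_iff₀ hden).1 hr
    have hEM : Real.exp (-M) * Real.exp M = 1 := by
      rw [← Real.exp_add]; simp
    have h3 := mul_le_mul_of_nonneg_left h2 (Real.exp_pos (-M)).le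
    simp only [hcdef]
    nlinarith [h3, hEM]
  have claim : ∀ s, 0 ≤ s → ‖e s‖ < ρ s := by
    by_contra hall
    push_neg at hall
    obtain ⟨s₀, hs₀, hs₀'⟩ := hall
    set B : Set ℝ := {s | 0 ≤ s ∧ ρ s ≤ ‖e s‖} with hBdef
    have hne : B.Nonempty := ⟨s₀, hs₀, hs₀'⟩
    have hclosed : IsClosed B := by
      have h1 : IsClosed {s : ℝ | 0 ≤ s} := isClosed_Ici
      have h2 : IsClosed {s : ℝ | ρ s ≤ ‖e s‖} := isClosed_le hρ he.norm
      exact h1.inter h2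
    have hbdd : BddBelow B := ⟨0, fun x hx => hx.1⟩
    set T := sInf B with hTdef
    have hTmem : T ∈ B := hclosed.csInf_mem hne hbdd
    have hT0 : 0 < T := by
      rcases lt_or_eq_of_le hTmem.1 with h | h
      · exact h
      · exfalso; rw [← h] at hTmem; exact absurd hTmem.2 (not_le.2 h0)
    have hbefore : ∀ s ∈ Set.Ico (0 : ℝ) T, ‖e s‖ < ρ s := by
      intro s hs
      by_contra hcon
      push_neg at hcon
      exact absurd (csInf_le hbdd (⟨hs.1, hcon⟩ : s ∈ B)) (not_le.2 hs.2)
    have hIco : ∀ s ∈ Set.Ico (0 : ℝ) T, ‖e s‖ ^ 2 ≤ (ρ s) ^ 2 * c := by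
      intro s hs
      refine key s hs.1 (hbefore s hs) (himp s hs.1 ?_)
      intro u hu
      exact hbefore u ⟨hu.1, lt_of_le_of_lt hu.2 hs.2⟩
    have hCclosed : IsClosed {t : ℝ | ‖e t‖ ^ 2 ≤ (ρ t) ^ 2 * c} :=
      isClosed_le ((he.norm).pow 2) ((hρ.pow 2).mul continuous_const)
    have hTC : T ∈ {t : ℝ | ‖e t‖ ^ 2 ≤ (ρ t) ^ 2 * c} := by
      have h1 : T ∈ closure (Set.Ico (0 : ℝ) T) := by
        rw [closure_Ico hT0.ne]
        exact Set.right_mem_Icc.2 hT0.le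
      exact hCclosed.closure_subset_iff.2 hIco h1
    have hρT := hρpos T hT0.le
    have := hTmem.2
    have hTC' : ‖e T‖ ^ 2 ≤ (ρ T) ^ 2 * c := hTC
    have h4 : (ρ T) ^ 2 ≤ ‖e T‖ ^ 2 := pow_le_pow_left₀ hρT.le this 2
    rw [hcdef] at hTC'
    nlinarith [Real.exp_pos (-M), mul_pos hρT hρT]
  intro t ht
  have hlog := himp t ht (fun s hs => claim s hs.1)
  have h1 := key t ht (claim t ht) hlog
  exact ⟨h1, claim t ht⟩
end
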